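/- Let P be a finite partially ordered set whose Hasse diagram contains no collider, i.e., there do not exist elements a, b, c of P with a ≠ b, a ⋖ c, and b ⋖ c. Then every nonempty connected upper set U of P is principal: there exists u ∈ U such that U = {y ∈ P : u ≤ y}. -/

import Mathlib

/-- The Hasse graph of a poset: an edge between `x` and `y` iff one covers the other. -/
def hasseGraph (P : Type*) [PartialOrder P] : SimpleGraph P where
  Adj x y := x ⋖ y ∨ y ⋖ x
  symm := by
    constructor
    intro x y h
    exact h.symm
  loopless := by
    constructor
    intro x h
    exact (h.elim id id).lt.ne rfl

/-- in a finite poset with no colliders in its Hasse diagram, every nonempty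
connected upper set is principal. -/
theorem connected_upperSet_principal_of_no_collider
    (P : Type*) [Fintype P] [PartialOrder P]
    (hnc : ¬ ∃ a b c : P, a ≠ b ∧ a ⋖ c ∧ b ⋖ c)
    (U : Set P) (hne : U.Nonempty) (hup : IsUpperSet U)
    (hconn : ((hasseGraph P).induce U).Connected) :
    ∃ u ∈ U, U = {y : P | u ≤ y} := by
  -- key lemma: if b < c and a ⋖ c then b ≤ a
  have key : ∀ a b c : P, b < c → a ⋖ c → b ≤ a := by
    intro a b c hbc hac
    obtain ⟨x, hbx, hxc⟩ := exists_le_covBy_of_lt hbc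
    rcases eq_or_ne x a with rfl | hxa
    · exact hbx
    · exact absurd ⟨x, a, c, hxa, hxc, hac⟩ hnc
  -- minimal element of U
  obtain ⟨u, hu, humin⟩ : ∃ a ∈ U, ∀ a' ∈ U, id a' ≤ id a → id a = id a' := by
    obtain ⟨a, ha⟩ := (Set.toFinite U).exists_minimal hne
    exact ⟨a, ha.1, fun b hb hba => (ha.eq_of_le hb hba).symm⟩
  refine ⟨u, hu, ?_⟩
  have hforall : ∀ y ∈ U, u ≤ y := by
    intro y hy
    obtain ⟨w⟩ := hconn ⟨u, hu⟩ ⟨y, hy⟩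
    have : ∀ (a b : {x // x ∈ U}) (_ : (((hasseGraph P).induce U)).Walk a b),
        u ≤ a.1 → u ≤ b.1 := by
      intro a b w
      induction w with
      | nil => exact id
      | cons h p ih =>
        rename_i x v _
        intro hux
        apply ih
        rcases h with hcov | hcov
        · exact hux.trans hcov.le
        · -- v.1 ⋖ x.1, u ≤ x.1
          rcases eq_or_lt_of_le hux with heq | hlt
          · -- u = x.1, so v.1 < u, contradicting minimality
            have hvu : v.1 < u := heq ▸ hcov.lt
            exact absurd (humin v.1 v.2 hvu.le) (by simpa using hvu.ne')
          · exact key v.1 u x.1 hlt hcov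
    exact this _ _ w le_rfl
  ext y
  exact ⟨fun hy => hforall y hy, fun hy => hup hy hu⟩
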